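/- Let R be an integral domain and A the rank-two Orlik–Solomon algebra on n generators over R. For λ, η ∈ R^n, a_λ ∧ a_η = 0 if and only if λ and η are parallel, or n ≥ 3 and λ_{[n]} = 0 = η_{[n]}. -/

import Mathlib

open ExteriorAlgebra

/-- The degree-one generator `e_i` of the exterior algebra on `R^n`. -/
noncomputable def osGen (R : Type*) [CommRing R] {n : ℕ} (i : Fin n) :
    ExteriorAlgebra R (Fin n → R) :=
  ι R (Pi.single i (1 : R))

/-- The relation defining the rank-two Orlik–Solomon algebra of the `n`-point line. -/
def u2nRel (R : Type*) [CommRing R] (n : ℕ) :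
    ExteriorAlgebra R (Fin n → R) → ExteriorAlgebra R (Fin n → R) → Prop :=
  fun x y => y = 0 ∧ ∃ i j k : Fin n, i ≠ j ∧ i ≠ k ∧ j ≠ k ∧
    x = osGen R j * osGen R k - osGen R i * osGen R k + osGen R i * osGen R j

section Aux

variable {R : Type*} [CommRing R] {n : ℕ}

lemma os_prod2 (a b : Fin 2 → R) :
    ι R a * ι R b = (a 0 * b 1 - a 1 * b 0) • (osGen R 0 * osGen R 1) := by
  have ha : a = a 0 • (Pi.single 0 1 : Fin 2 → R) + a 1 • (Pi.single 1 1 : Fin 2 → R) := by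
    funext j; fin_cases j <;> simp
  have hb : b = b 0 • (Pi.single 0 1 : Fin 2 → R) + b 1 • (Pi.single 1 1 : Fin 2 → R) := by
    funext j; fin_cases j <;> simp
  have hswap : ι R (Pi.single 1 (1:R)) * ι R ((Pi.single 0 1 : Fin 2 → R))
      = -(ι R ((Pi.single 0 1 : Fin 2 → R)) * ι R (Pi.single 1 (1:R))) :=
    eq_neg_of_add_eq_zero_right (ι_add_mul_swap _ _)
  rw [osGen, osGen]
  conv_lhs => rw [ha, hb]
  simp only [map_add, map_smul, add_mul, mul_add, smul_mul_smul_comm,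
    ι_sq_zero, hswap, smul_zero, smul_neg, zero_add, add_zero]
  module

noncomputable def osDetFam : ∀ i : ℕ, (Fin 2 → R) [⋀^Fin i]→ₗ[R] R
  | 2 => Matrix.detRowAlternating
  | _ => 0

lemma os_lift_xy :
    liftAlternating (R := R) osDetFam (osGen R 0 * osGen R 1) = 1 := by
  rw [osGen, osGen, liftAlternating_ι_mul, liftAlternating_ι]
  show Matrix.det (Matrix.vecCons (Pi.single 0 1) ![(Pi.single 1 1 : Fin 2 → R)]) = 1
  erw [Matrix.det_fin_two]
  simp

lemma os_torsionfree {c : R} (h : c • (osGen R (0 : Fin 2) * osGen R 1) = 0) : c = 0 := by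
  have := congrArg (liftAlternating (R := R) osDetFam) h
  rw [map_smul, map_zero, os_lift_xy, smul_eq_mul, mul_one] at this
  exact this

/-- linear map `v ↦ (∑ v i, ∑ w i * v i)`. -/
noncomputable def osLmap (w : Fin n → R) : (Fin n → R) →ₗ[R] (Fin 2 → R) where
  toFun v := ![∑ i, v i, ∑ i, w i * v i]
  map_add' u v := by
    funext j
    fin_cases j <;> simp [Finset.sum_add_distrib, mul_add]
  map_smul' c v := by
    funext j
    fin_cases j <;> simp [Finset.mul_sum, mul_left_comm]

noncomputable def osPhi (w : Fin n → R) :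
    ExteriorAlgebra R (Fin n → R) →ₐ[R] ExteriorAlgebra R (Fin 2 → R) :=
  lift R ⟨(ι R).comp (osLmap w), fun m => by simp [ι_sq_zero]⟩

lemma osPhi_ι (w v : Fin n → R) :
    osPhi w (ι R v) = ι R ![∑ i, v i, ∑ i, w i * v i] := by
  rw [osPhi, lift_ι_apply]; rfl

lemma osPhi_osGen (w : Fin n → R) (i : Fin n) : osPhi w (osGen R i) = ι R ![1, w i] := by
  rw [osGen, osPhi_ι]
  congr 1
  have h1 : ∑ i', (Pi.single i 1 : Fin n → R) i' = 1 := by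
    simp [Pi.single_apply]
  have h2 : ∑ i', w i' * (Pi.single i 1 : Fin n → R) i' = w i := by
    simp [Pi.single_apply, mul_ite]
  rw [h1, h2]

lemma osPhi_rel (w : Fin n → R) : ∀ ⦃x y⦄, u2nRel R n x y → osPhi w x = osPhi w y := by
  rintro x y ⟨rfl, i, j, k, hij, hik, hjk, rfl⟩
  rw [map_zero, map_add, map_sub, map_mul, map_mul, map_mul,
    osPhi_osGen, osPhi_osGen, osPhi_osGen, os_prod2, os_prod2, os_prod2]
  rw [← sub_smul, ← add_smul]
  simp only [Matrix.cons_val_zero, Matrix.cons_val_one, Matrix.head_cons]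
  rw [show ((1:R) * w k - w j * 1 - (1 * w k - w i * 1) + (1 * w j - w i * 1)) = 0 from by
    ring]
  exact zero_smul _ _

lemma os_forward {l η : Fin n → R}
    (hq : RingQuot.mkAlgHom R (u2nRel R n) (ι R l * ι R η) = 0) (j : Fin n) :
    (∑ i, l i) * η j - (∑ i, η i) * l j = 0 := by
  set w : Fin n → R := Pi.single j 1 with hw
  have h0 : osPhi w (ι R l * ι R η) = 0 := by
    rw [← RingQuot.liftAlgHom_mkAlgHom_apply R (osPhi w) (osPhi_rel w), hq, map_zero]
  rw [map_mul, osPhi_ι, osPhi_ι, os_prod2] at h0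
  simp only [Matrix.cons_val_zero, Matrix.cons_val_one, Matrix.head_cons] at h0
  have hsl : ∑ i, w i * l i = l j := by
    rw [hw]; simp [Pi.single_apply, mul_ite]
  have hse : ∑ i, w i * η i = η j := by
    rw [hw]; simp [Pi.single_apply, mul_ite]
  rw [hsl, hse] at h0
  linear_combination os_torsionfree h0

lemma os_expand (v : Fin n → R) : ι R v = ∑ i, v i • osGen R i := by
  have hv : v = ∑ i, v i • (Pi.single i 1 : Fin n → R) := by
    funext j
    rw [Finset.sum_apply]
    simp [Pi.single_apply, mul_ite]
  conv_lhs => rw [hv]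
  rw [map_sum]
  exact Finset.sum_congr rfl fun i _ => by rw [map_smul, osGen]

lemma os_q_mul (hn : 2 ≤ n) (i j : Fin n) :
    RingQuot.mkAlgHom R (u2nRel R n) (osGen R i * osGen R j) =
      RingQuot.mkAlgHom R (u2nRel R n) (osGen R ⟨0, by omega⟩ * osGen R j) -
      RingQuot.mkAlgHom R (u2nRel R n) (osGen R ⟨0, by omega⟩ * osGen R i) := by
  set Q := RingQuot.mkAlgHom R (u2nRel R n) with hQ
  set z : Fin n := ⟨0, by omega⟩ with hz
  by_cases hij : i = j
  · subst hij
    rw [osGen, ι_sq_zero, map_zero, sub_self]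
  by_cases hzi : z = i
  · subst hzi
    rw [show Q (osGen R z * osGen R z) = 0 from by rw [osGen, ι_sq_zero, map_zero], sub_zero]
  by_cases hzj : z = j
  · subst hzj
    have hswap : osGen R i * osGen R z = -(osGen R z * osGen R i) :=
      eq_neg_of_add_eq_zero_left (by rw [osGen, osGen]; exact ι_add_mul_swap _ _)
    rw [hswap, map_neg,
      show Q (osGen R z * osGen R z) = 0 from by rw [osGen, ι_sq_zero, map_zero], zero_sub]
  · have hrel : u2nRel R n
        (osGen R i * osGen R j - osGen R z * osGen R j + osGen R z * osGen R i) 0 :=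
      ⟨rfl, z, i, j, hzi, hzj, hij, rfl⟩
    have h0 : Q (osGen R i * osGen R j) - Q (osGen R z * osGen R j)
        + Q (osGen R z * osGen R i) = 0 := by
      rw [← map_sub, ← map_add]
      rw [RingQuot.mkAlgHom_rel R hrel, map_zero]
    have h1 : Q (osGen R i * osGen R j) + Q (osGen R z * osGen R i)
        = Q (osGen R z * osGen R j) := by
      rwa [sub_add_eq_add_sub, sub_eq_zero] at h0
    exact eq_sub_of_add_eq h1

lemma os_backward {l η : Fin n → R} (hn : 2 ≤ n)
    (hc : ∀ j, (∑ i, l i) * η j - (∑ i, η i) * l j = 0) :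
    RingQuot.mkAlgHom R (u2nRel R n) (ι R l * ι R η) = 0 := by
  set Q := RingQuot.mkAlgHom R (u2nRel R n) with hQ
  set z : Fin n := ⟨0, by omega⟩ with hz
  have step1 : ι R l * ι R η = ∑ i, ∑ j, (l i * η j) • (osGen R i * osGen R j) := by
    rw [os_expand l, os_expand η, Finset.sum_mul_sum]
    exact Finset.sum_congr rfl fun i _ => Finset.sum_congr rfl fun j _ =>
      smul_mul_smul_comm _ _ _ _
  have step2 : Q (ι R l * ι R η) =
      ∑ i, ∑ j, (l i * η j) • (Q (osGen R z * osGen R j) - Q (osGen R z * osGen R i)) := by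
    rw [step1, map_sum]
    refine Finset.sum_congr rfl fun i _ => ?_
    rw [map_sum]
    refine Finset.sum_congr rfl fun j _ => ?_
    rw [map_smul, os_q_mul hn i j]
  rw [step2]
  simp only [smul_sub]
  simp only [Finset.sum_sub_distrib]
  rw [Finset.sum_comm (f := fun i j => (l i * η j) • Q (osGen R z * osGen R j))]
  simp only [← Finset.sum_smul, ← Finset.sum_mul, ← Finset.mul_sum]
  rw [← Finset.sum_sub_distrib]
  apply Finset.sum_eq_zero
  intro j _
  rw [← sub_smul,
    show (∑ i, l i) * η j - l j * (∑ i, η i) = 0 from by linear_combination hc j, zero_smul]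

lemma os_cond_iff [IsDomain R] (hn : 2 ≤ n) (l η : Fin n → R) :
    (∀ j, (∑ i, l i) * η j - (∑ i, η i) * l j = 0) ↔
      ((∀ i j : Fin n, l i * η j - l j * η i = 0) ∨
        (3 ≤ n ∧ (∑ i, l i) = 0 ∧ (∑ i, η i) = 0)) := by
  constructor
  · intro h
    by_cases hS : (∑ i, l i) = 0
    · by_cases hT : (∑ i, η i) = 0
      · by_cases h3 : 3 ≤ n
        · exact Or.inr ⟨h3, hS, hT⟩
        · left
          have hn2 : n = 2 := by omega
          subst hn2
          rw [Fin.sum_univ_two] at hS hT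
          intro i j
          fin_cases i <;> fin_cases j <;> simp only [Fin.mk_zero, Fin.mk_one]
          · ring
          · linear_combination l 0 * hT - η 0 * hS
          · linear_combination η 0 * hS - l 0 * hT
          · ring
      · -- ∑η ≠ 0, ∑l = 0 forces l = 0
        left
        intro i j
        have hzero : ∀ k, l k = 0 := by
          intro k
          have hk := h k
          rw [hS, zero_mul, zero_sub, neg_eq_zero] at hk
          exact (mul_eq_zero.mp hk).resolve_left hT
        rw [hzero i, hzero j]
        ring
    · left
      intro i j
      have key : (∑ k, l k) * (l i * η j - l j * η i) = 0 := by
        linear_combination l i * h j - l j * h i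
      exact (mul_eq_zero.mp key).resolve_left hS
  · rintro (hpar | ⟨-, hS, hT⟩)
    · intro j
      have : (∑ i, l i) * η j - (∑ i, η i) * l j = ∑ i, (l i * η j - l j * η i) := by
        rw [Finset.sum_sub_distrib, ← Finset.sum_mul, ← Finset.mul_sum]
        ring
      rw [this]
      exact Finset.sum_eq_zero fun i _ => hpar i j
    · intro j
      rw [hS, hT]
      ring

end Aux

/-- Over an integral domain `R`, in the rank-two Orlik–Solomon algebra on `n` generators,
`a_λ ∧ a_η = 0` iff `λ` and `η` are parallel, or `n ≥ 3` and `λ_{[n]} = 0 = η_{[n]}`. -/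
theorem stmt_7 {R : Type*} [CommRing R] [IsDomain R] {n : ℕ} (hn : 2 ≤ n)
    (l η : Fin n → R) :
    RingQuot.mkRingHom (u2nRel R n) (ι R l * ι R η) = 0 ↔
      ((∀ i j : Fin n, l i * η j - l j * η i = 0) ∨
        (3 ≤ n ∧ (∑ i, l i) = 0 ∧ (∑ i, η i) = 0)) := by
  have hcoe : RingQuot.mkRingHom (u2nRel R n) (ι R l * ι R η)
      = RingQuot.mkAlgHom R (u2nRel R n) (ι R l * ι R η) := by
    rw [← RingQuot.mkAlgHom_coe R (u2nRel R n)]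
    rfl
  rw [hcoe, ← os_cond_iff hn l η]
  exact ⟨fun h j => os_forward h j, fun h => os_backward hn h⟩
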